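/- Let R = ℂ[x, y] and let φ : R^4 → R^4 be the R-linear map given by the matrix [[−1, 0, 0, x], [x, −y, 0, 0], [0, 1, −1, 0], [0, 0, x, −y]] acting on column vectors. Then the cokernel of φ is isomorphic, as an R-module, to the polynomial ring ℂ[t] where x acts as multiplication by t^2 and y acts as multiplication by t^3, i.e., to the normalization of the coordinate ring ℂ[x,y]/(x^3 − y^2) of the cuspidal cubic curve. -/
import Mathlib


open MvPolynomial

/-- The `ℂ[x,y]`-module structure on `ℂ[t]` in which `x` acts as multiplication by `t²`
and `y` acts as multiplication by `t³` (i.e. `ℂ[t]` is the normalization of the coordinate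
ring `ℂ[x,y]/(x³ − y²)` of the cuspidal cubic). -/
noncomputable instance cuspModule : Module (MvPolynomial (Fin 2) ℂ) (Polynomial ℂ) :=
  Module.compHom (Polynomial ℂ)
    ((MvPolynomial.aeval ![Polynomial.X ^ 2, Polynomial.X ^ 3]).toRingHom :
      MvPolynomial (Fin 2) ℂ →+* Polynomial ℂ)

namespace HHLcusp

noncomputable abbrev R := MvPolynomial (Fin 2) ℂ

noncomputable def a : R →+* Polynomial ℂ :=
  (MvPolynomial.aeval ![Polynomial.X ^ 2, Polynomial.X ^ 3]).toRingHom

lemma smul_def (r : R) (p : Polynomial ℂ) : r • p = a r * p := rfl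

noncomputable def Mmat : Matrix (Fin 4) (Fin 4) R :=
  !![-1, 0, 0, X 0; X 0, -X 1, 0, 0; 0, 1, -1, 0; 0, 0, X 0, -X 1]

noncomputable def pi4 : (Fin 4 → R) →ₗ[R] Polynomial ℂ where
  toFun v := a (v 1) + a (v 3) * Polynomial.X + a (v 0) * Polynomial.X ^ 2
      + a (v 2) * Polynomial.X ^ 3
  map_add' u v := by simp only [Pi.add_apply, map_add]; ring
  map_smul' r v := by
    simp only [Pi.smul_apply, smul_eq_mul, map_mul, RingHom.id_apply, smul_def]; ring

lemma a_X0 : a (X 0) = Polynomial.X ^ 2 := by simp [a]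
lemma a_X1 : a (X 1) = Polynomial.X ^ 3 := by simp [a]

lemma range_le_ker : LinearMap.range Mmat.mulVecLin ≤ LinearMap.ker pi4 := by
  rintro _ ⟨u, rfl⟩
  simp only [LinearMap.mem_ker]
  simp [pi4, Mmat, Matrix.mulVecLin_apply, Matrix.mulVec, dotProduct,
    Fin.sum_univ_four, map_add, map_mul, map_neg, map_one, a_X0, a_X1]
  ring

noncomputable def A (p : Polynomial ℂ) : R :=
  p.sum fun n c => if Even n then C c * X 0 ^ (n / 2) else 0

noncomputable def B (p : Polynomial ℂ) : R :=
  p.sum fun n c => if Even n then 0 else C c * X 0 ^ (n / 2)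

lemma A_add (p q : Polynomial ℂ) : A (p + q) = A p + A q := by
  unfold A
  rw [Polynomial.sum_add_index] <;> intros <;> split <;> simp [map_add, add_mul]

lemma B_add (p q : Polynomial ℂ) : B (p + q) = B p + B q := by
  unfold B
  rw [Polynomial.sum_add_index] <;> intros <;> split <;> simp [map_add, add_mul]

lemma A_monomial (n : ℕ) (c : ℂ) :
    A (Polynomial.monomial n c) = if Even n then C c * X 0 ^ (n / 2) else 0 := by
  unfold A
  rw [Polynomial.sum_monomial_index]
  split <;> simp

lemma B_monomial (n : ℕ) (c : ℂ) :
    B (Polynomial.monomial n c) = if Even n then 0 else C c * X 0 ^ (n / 2) := by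
  unfold B
  rw [Polynomial.sum_monomial_index]
  split <;> simp

lemma A_C_mul (c : ℂ) (p : Polynomial ℂ) : A (Polynomial.C c * p) = C c * A p := by
  induction p using Polynomial.induction_on' with
  | add p q hp hq => rw [mul_add, A_add, A_add, hp, hq, mul_add]
  | monomial n d =>
      rw [Polynomial.C_mul_monomial, A_monomial, A_monomial]
      split <;> simp [map_mul] <;> ring

lemma B_C_mul (c : ℂ) (p : Polynomial ℂ) : B (Polynomial.C c * p) = C c * B p := by
  induction p using Polynomial.induction_on' with
  | add p q hp hq => rw [mul_add, B_add, B_add, hp, hq, mul_add]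
  | monomial n d =>
      rw [Polynomial.C_mul_monomial, B_monomial, B_monomial]
      split <;> simp [map_mul] <;> ring

lemma A_X2_mul (p : Polynomial ℂ) : A (Polynomial.X ^ 2 * p) = X 0 * A p := by
  induction p using Polynomial.induction_on' with
  | add p q hp hq => rw [mul_add, A_add, A_add, hp, hq, mul_add]
  | monomial n d =>
      rw [Polynomial.X_pow_mul_monomial, A_monomial, A_monomial]
      have h2 : (n + 2) / 2 = n / 2 + 1 := by omega
      have he : Even (n + 2) ↔ Even n := by simp [Nat.even_add]
      by_cases h : Even n
      · rw [if_pos h, if_pos (he.mpr h), h2, pow_succ]; ring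
      · rw [if_neg h, if_neg (fun hh => h (he.mp hh)), mul_zero]

lemma B_X2_mul (p : Polynomial ℂ) : B (Polynomial.X ^ 2 * p) = X 0 * B p := by
  induction p using Polynomial.induction_on' with
  | add p q hp hq => rw [mul_add, B_add, B_add, hp, hq, mul_add]
  | monomial n d =>
      rw [Polynomial.X_pow_mul_monomial, B_monomial, B_monomial]
      have h2 : (n + 2) / 2 = n / 2 + 1 := by omega
      have he : Even (n + 2) ↔ Even n := by simp [Nat.even_add]
      by_cases h : Even n
      · rw [if_pos h, if_pos (he.mpr h), mul_zero]
      · rw [if_neg h, if_neg (fun hh => h (he.mp hh)), h2, pow_succ]; ring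

lemma A_X3_mul (p : Polynomial ℂ) : A (Polynomial.X ^ 3 * p) = X 0 ^ 2 * B p := by
  induction p using Polynomial.induction_on' with
  | add p q hp hq => rw [mul_add, A_add, B_add, hp, hq, mul_add]
  | monomial n d =>
      rw [Polynomial.X_pow_mul_monomial, A_monomial, B_monomial]
      have he : Even (n + 3) ↔ ¬ Even n := by
        simp [Nat.even_add, Nat.even_iff, Nat.odd_iff]; omega
      by_cases h : Even n
      · rw [if_neg (fun hh => (he.mp hh) h), if_pos h, mul_zero]
      · have h2 : (n + 3) / 2 = n / 2 + 2 := by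
          rcases Nat.odd_iff.mp (Nat.not_even_iff_odd.mp h) with hm
          omega
        rw [if_pos (he.mpr h), if_neg h, h2, pow_add]; ring

lemma B_X3_mul (p : Polynomial ℂ) : B (Polynomial.X ^ 3 * p) = X 0 * A p := by
  induction p using Polynomial.induction_on' with
  | add p q hp hq => rw [mul_add, B_add, A_add, hp, hq, mul_add]
  | monomial n d =>
      rw [Polynomial.X_pow_mul_monomial, B_monomial, A_monomial]
      have he : Even (n + 3) ↔ ¬ Even n := by
        simp [Nat.even_add, Nat.even_iff, Nat.odd_iff]; omega
      by_cases h : Even n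
      · have h2 : (n + 3) / 2 = n / 2 + 1 := by
          rcases h with ⟨k, hk⟩; omega
        rw [if_neg (fun hh => (he.mp hh) h), if_pos h, h2, pow_succ]; ring
      · rw [if_pos (he.mpr h), if_neg h, mul_zero]

noncomputable abbrev Q :=
  (Fin 4 → R) ⧸ LinearMap.range Mmat.mulVecLin

noncomputable def sfun (p : Polynomial ℂ) : Fin 4 → R := ![0, A p, 0, B p]

noncomputable def q (p : Polynomial ℂ) : Q := Submodule.Quotient.mk (sfun p)

lemma q_add (p p' : Polynomial ℂ) : q (p + p') = q p + q p' := by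
  unfold q sfun
  rw [← Submodule.Quotient.mk_add]
  congr 1
  funext i
  fin_cases i <;> simp [A_add, B_add]

lemma q_C_mul (c : ℂ) (p : Polynomial ℂ) : q (Polynomial.C c * p) = (C c : R) • q p := by
  unfold q sfun
  rw [← Submodule.Quotient.mk_smul]
  congr 1
  funext i
  fin_cases i <;> simp [A_C_mul, B_C_mul]

lemma q_X2_mul (p : Polynomial ℂ) : q (Polynomial.X ^ 2 * p) = (X 0 : R) • q p := by
  unfold q sfun
  rw [← Submodule.Quotient.mk_smul]
  congr 1
  funext i
  fin_cases i <;> simp [A_X2_mul, B_X2_mul]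

lemma q_X3_mul (p : Polynomial ℂ) : q (Polynomial.X ^ 3 * p) = (X 1 : R) • q p := by
  unfold q sfun
  rw [← Submodule.Quotient.mk_smul]
  rw [Submodule.Quotient.eq]
  refine ⟨![X 0 * B p, A p, A p, B p], ?_⟩
  simp only [Matrix.mulVecLin_apply]
  funext i
  fin_cases i <;>
    simp [Mmat, Matrix.mulVec, dotProduct, Fin.sum_univ_four, A_X3_mul, B_X3_mul] <;>
    ring

lemma q_smul (r : R) (p : Polynomial ℂ) : q (a r * p) = r • q p := by
  induction r using MvPolynomial.induction_on generalizing p with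
  | C c =>
      have : a (C c) = Polynomial.C c := by simp [a]
      rw [this, q_C_mul]
  | add r r' hr hr' =>
      rw [map_add, add_mul, q_add, hr, hr', add_smul]
  | mul_X r i hr =>
      have key : ∀ p : Polynomial ℂ, q (a (X i) * p) = (X i : R) • q p := by
        fin_cases i
        · show ∀ p : Polynomial ℂ, q (a (X 0) * p) = (X 0 : R) • q p
          intro p; rw [a_X0]; exact q_X2_mul p
        · show ∀ p : Polynomial ℂ, q (a (X 1) * p) = (X 1 : R) • q p
          intro p; rw [a_X1]; exact q_X3_mul p
      rw [map_mul, mul_comm (a r) (a (X i)), mul_assoc, key, hr, smul_smul, mul_comm (X i) r]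

noncomputable def g : Polynomial ℂ →ₗ[R] Q where
  toFun := q
  map_add' := q_add
  map_smul' r p := by
    rw [RingHom.id_apply]
    show q (a r * p) = r • q p
    exact q_smul r p

noncomputable def f : Q →ₗ[R] Polynomial ℂ :=
  Submodule.liftQ _ pi4 range_le_ker

lemma sfun_add (p p' : Polynomial ℂ) : sfun (p + p') = sfun p + sfun p' := by
  funext i; fin_cases i <;> simp [sfun, A_add, B_add]

lemma pi4_sfun (p : Polynomial ℂ) : pi4 (sfun p) = p := by
  induction p using Polynomial.induction_on' with
  | add p p' hp hp' => rw [sfun_add, map_add, hp, hp']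
  | monomial n c =>
      rcases Nat.even_or_odd n with h | h
      · obtain ⟨k, rfl⟩ := h
        have h1 : A (Polynomial.monomial (k + k) c) = C c * X 0 ^ k := by
          rw [A_monomial, if_pos ⟨k, rfl⟩, show (k + k) / 2 = k by omega]
        have h2 : B (Polynomial.monomial (k + k) c) = 0 := by
          rw [B_monomial, if_pos ⟨k, rfl⟩]
        simp [pi4, sfun, h1, h2, a]
        rw [← pow_mul, two_mul, Polynomial.C_mul_X_pow_eq_monomial]
      · obtain ⟨k, rfl⟩ := h
        have hno : ¬ Even (2 * k + 1) := by simp [Nat.even_iff]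
        have h1 : A (Polynomial.monomial (2 * k + 1) c) = 0 := by
          rw [A_monomial, if_neg hno]
        have h2 : B (Polynomial.monomial (2 * k + 1) c) = C c * X 0 ^ k := by
          rw [B_monomial, if_neg hno, show (2 * k + 1) / 2 = k by omega]
        simp [pi4, sfun, h1, h2, a]
        rw [← pow_mul, mul_assoc, ← pow_succ, Polynomial.C_mul_X_pow_eq_monomial]

lemma A_one : A 1 = 1 := by
  rw [← Polynomial.monomial_zero_one, A_monomial, if_pos (by decide)]; simp

lemma B_one : B 1 = 0 := by
  rw [← Polynomial.monomial_zero_one, B_monomial, if_pos (by decide)]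

lemma A_Xp : A Polynomial.X = 0 := by
  rw [← Polynomial.monomial_one_one_eq_X, A_monomial, if_neg (by decide)]

lemma B_Xp : B Polynomial.X = 1 := by
  rw [← Polynomial.monomial_one_one_eq_X, B_monomial, if_neg (by decide)]; simp

lemma A_X2 : A (Polynomial.X ^ 2) = X 0 := by
  rw [Polynomial.X_pow_eq_monomial, A_monomial, if_pos (by decide)]; simp

lemma B_X2 : B (Polynomial.X ^ 2) = 0 := by
  rw [Polynomial.X_pow_eq_monomial, B_monomial, if_pos (by decide)]

lemma A_X3 : A (Polynomial.X ^ 3) = 0 := by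
  rw [Polynomial.X_pow_eq_monomial, A_monomial, if_neg (by decide)]

lemma B_X3 : B (Polynomial.X ^ 3) = X 0 := by
  rw [Polynomial.X_pow_eq_monomial, B_monomial, if_neg (by decide)]; simp

lemma g_pi4 (v : Fin 4 → R) : g (pi4 v) = Submodule.Quotient.mk v := by
  have hv : pi4 v = v 1 • (1 : Polynomial ℂ) + v 3 • Polynomial.X
      + v 0 • (Polynomial.X ^ 2) + v 2 • (Polynomial.X ^ 3) := by
    simp only [smul_def, mul_one]
    show a (v 1) + a (v 3) * Polynomial.X + a (v 0) * Polynomial.X ^ 2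
        + a (v 2) * Polynomial.X ^ 3 = _
    ring
  rw [hv, map_add, map_add, map_add, map_smul, map_smul, map_smul, map_smul]
  show v 1 • q 1 + v 3 • q Polynomial.X + v 0 • q (Polynomial.X ^ 2)
      + v 2 • q (Polynomial.X ^ 3) = _
  unfold q sfun
  rw [A_one, B_one, A_Xp, B_Xp, A_X2, B_X2, A_X3, B_X3]
  simp only [← Submodule.Quotient.mk_smul, ← Submodule.Quotient.mk_add]
  rw [Submodule.Quotient.eq]
  refine ⟨![v 0, 0, v 2, 0], ?_⟩
  simp only [Matrix.mulVecLin_apply]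
  funext i
  fin_cases i <;>
    simp [Mmat, Matrix.mulVec, dotProduct, Fin.sum_univ_four] <;> ring

end HHLcusp

/-- The cokernel of the differential of the affine HHL complex for the cuspidal cubic
example is isomorphic, as an `R = ℂ[x,y]`-module, to `ℂ[t]` where `x` acts by `t²` and
`y` acts by `t³`. -/
theorem HHL_cusp_cokernel :
    Nonempty
      (((Fin 4 → MvPolynomial (Fin 2) ℂ) ⧸
          LinearMap.range
            (Matrix.mulVecLin
              (!![-1, 0, 0, X 0;
                  X 0, -X 1, 0, 0;
                  0, 1, -1, 0;
                  0, 0, X 0, -X 1] : Matrix (Fin 4) (Fin 4) (MvPolynomial (Fin 2) ℂ))))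
        ≃ₗ[MvPolynomial (Fin 2) ℂ] Polynomial ℂ) := by
  refine ⟨LinearEquiv.ofLinear HHLcusp.f HHLcusp.g ?_ ?_⟩
  · apply LinearMap.ext
    intro p
    show HHLcusp.f (HHLcusp.q p) = p
    unfold HHLcusp.q HHLcusp.f
    rw [Submodule.liftQ_apply]
    exact HHLcusp.pi4_sfun p
  · apply LinearMap.ext
    intro x
    obtain ⟨v, rfl⟩ := Submodule.Quotient.mk_surjective _ x
    show HHLcusp.g (HHLcusp.f (Submodule.Quotient.mk v)) = Submodule.Quotient.mk v
    rw [show HHLcusp.f (Submodule.Quotient.mk v) = HHLcusp.pi4 v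
        from Submodule.liftQ_apply _ HHLcusp.pi4 v]
    exact HHLcusp.g_pi4 v
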